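/- Completeness of L*_CS with respect to subset models: let L* be a logic (consisting of cl, j+, jc* together with some subset of {j4, jd, jt}) and CS a constant specification, where CS is required to be axiomatically appropriate in case jd ∈ L* and jt ∉ L*. Then for every formula F ∈ L_J, if M, Γ ⊩ F for all L*_CS-subset models M and all Γ ∈ W0, then L*_CS ⊢ F. -/

import Mathlib

/-- Justification terms: constants `c_i`, variables `x_i`, the distinguished
constant `c*`, sum `+` and `!`. -/
inductive Tm : Type
  | const : ℕ → Tm
  | var : ℕ → Tm
  | cstar : Tm
  | plus : Tm → Tm → Tm
  | bang : Tm → Tm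

/-- Formulas of `L_J`: atomic propositions, `⊥`, implication and `t:F`. -/
inductive Fml : Type
  | atom : ℕ → Fml
  | bot : Fml
  | imp : Fml → Fml → Fml
  | just : Tm → Fml → Fml

namespace Fml
/-- `¬A := A → ⊥`. -/
def neg (A : Fml) : Fml := A.imp .bot
/-- `A ∨ B := ¬A → B`. -/
def or' (A B : Fml) : Fml := A.neg.imp B
/-- `A ∧ B := ¬(A → ¬B)`. -/
def and' (A B : Fml) : Fml := (A.imp B.neg).neg
end Fml

/-- `c*`-terms: `c*` itself, or `s + c` or `c + t` with `c` a `c*`-term. -/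
def Tm.isCStar : Tm → Bool
  | .cstar => true
  | .plus s t => s.isCStar || t.isCStar
  | _ => false

/-- Which of the optional axioms j4, jd, jt belong to the logic `L*`. -/
structure Flags : Type where
  j4 : Bool
  jd : Bool
  jt : Bool

/-- The axioms of the logic `L*`: classical propositional axioms, j+, jc*,
together with the optional axioms j4, jd, jt as given by the flags. -/
inductive StarAxiom (fl : Flags) : Fml → Prop
  | cl1 (A B : Fml) : StarAxiom fl (A.imp (B.imp A))
  | cl2 (A B C : Fml) :
      StarAxiom fl ((A.imp (B.imp C)).imp ((A.imp B).imp (A.imp C)))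
  | cl3 (A : Fml) : StarAxiom fl (A.neg.neg.imp A)
  | jplus (s t : Tm) (A : Fml) :
      StarAxiom fl (((Fml.just s A).or' (Fml.just t A)).imp (Fml.just (s.plus t) A))
  | jcstar (c : Tm) (A B : Fml) (h : c.isCStar = true) :
      StarAxiom fl (((Fml.just c A).and' (Fml.just c (A.imp B))).imp (Fml.just c B))
  | j4 (t : Tm) (A : Fml) (h : fl.j4 = true) :
      StarAxiom fl ((Fml.just t A).imp (Fml.just t.bang (Fml.just t A)))
  | jd (t : Tm) (h : fl.jd = true) :
      StarAxiom fl ((Fml.just t Fml.bot).imp Fml.bot)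
  | jt (t : Tm) (A : Fml) (h : fl.jt = true) :
      StarAxiom fl ((Fml.just t A).imp A)

/-- `bangIter n t = !…!t` with `n` occurrences of `!`. -/
def bangIter : ℕ → Tm → Tm
  | 0, t => t
  | n + 1, t => (bangIter n t).bang

/-- `anFml c A n = !…!c : !…!c : … : !c : c : A` (with `n, n-1, …, 1, 0` bangs). -/
def anFml (c : Tm) (A : Fml) : ℕ → Fml
  | 0 => Fml.just c A
  | n + 1 => Fml.just (bangIter (n + 1) c) (anFml c A n)

/-- A constant specification for `L*`: a set of pairs `(c, A)` where `c` is a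
constant and `A` an axiom of `L*`. -/
def IsCS (fl : Flags) (CS : Set (ℕ × Fml)) : Prop :=
  ∀ p ∈ CS, StarAxiom fl p.2

/-- `CS` is axiomatically appropriate: every axiom has a constant justifying it. -/
def AxAppropriate (fl : Flags) (CS : Set (ℕ × Fml)) : Prop :=
  ∀ A : Fml, StarAxiom fl A → ∃ c : ℕ, (c, A) ∈ CS

/-- Hilbert-style derivability in `L*_CS`: axioms of `L*`, modus ponens, and
axiom necessitation. -/
inductive Deriv (fl : Flags) (CS : Set (ℕ × Fml)) : Fml → Prop
  | ax {A : Fml} : StarAxiom fl A → Deriv fl CS A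
  | mp {A B : Fml} : Deriv fl CS (A.imp B) → Deriv fl CS A → Deriv fl CS B
  | an {c : ℕ} {A : Fml} (n : ℕ) (h : (c, A) ∈ CS) :
      Deriv fl CS (anFml (Tm.const c) A n)

/-- An `L*_CS`-subset model `(W, W0, V, E)`; `V ω F` encodes `V(ω,F) = 1`. -/
structure SubsetModel (fl : Flags) (CS : Set (ℕ × Fml)) (W : Type*) : Type _ where
  W0 : Set W
  V : W → Fml → Prop
  E : W → Tm → Set W
  w0_nonempty : W0.Nonempty
  v_bot : ∀ ω ∈ W0, ¬ V ω Fml.bot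
  v_imp : ∀ ω ∈ W0, ∀ F G : Fml, V ω (F.imp G) ↔ (¬ V ω F ∨ V ω G)
  v_just : ∀ ω ∈ W0, ∀ (t : Tm) (F : Fml),
      V ω (Fml.just t F) ↔ E ω t ⊆ {υ | V υ F}
  e_plus : ∀ ω ∈ W0, ∀ s t : Tm, E ω (s.plus t) ⊆ E ω s ∩ E ω t
  e_cstar : ∀ ω ∈ W0,
      E ω Tm.cstar ⊆ {υ | ∀ A B : Fml, V υ A → V υ (A.imp B) → V υ B}
  e_jd : fl.jd = true → ∀ ω ∈ W0, ∀ t : Tm, ∃ υ ∈ W0, υ ∈ E ω t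
  e_jt : fl.jt = true → ∀ ω ∈ W0, ∀ t : Tm, ω ∈ E ω t
  e_j4 : fl.j4 = true → ∀ ω ∈ W0, ∀ t : Tm,
      E ω t.bang ⊆ {υ | ∀ F : Fml, V ω (Fml.just t F) → V υ (Fml.just t F)}
  e_cs : ∀ ω ∈ W0, ∀ (c : ℕ) (A : Fml), (c, A) ∈ CS →
      E ω (Tm.const c) ⊆ {υ | V υ A}
  e_cs_bang : ∀ ω ∈ W0, ∀ (c : ℕ) (A : Fml), (c, A) ∈ CS → ∀ n : ℕ,
      E ω (bangIter (n + 1) (Tm.const c)) ⊆ {υ | V υ (anFml (Tm.const c) A n)}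

/-- The conjunction `⋀Σ` of a finite (list of) formulas. -/
def conjList : List Fml → Fml
  | [] => Fml.bot.imp Fml.bot
  | A :: l => A.and' (conjList l)

/-- `Γ` is `L*_CS`-consistent: `L*_CS ⊬ ⋀Σ → ⊥` for every finite `Σ ⊆ Γ`. -/
def SetConsistent (fl : Flags) (CS : Set (ℕ × Fml)) (Γ : Set Fml) : Prop :=
  ∀ l : List Fml, (∀ A ∈ l, A ∈ Γ) → ¬ Deriv fl CS ((conjList l).imp Fml.bot)

/-- `Γ` is maximal `L*_CS`-consistent: it is consistent and no proper superset
of it is consistent. -/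
def MaxConsistent (fl : Flags) (CS : Set (ℕ × Fml)) (Γ : Set Fml) : Prop :=
  SetConsistent fl CS Γ ∧ ∀ Δ : Set Fml, Γ ⊂ Δ → ¬ SetConsistent fl CS Δ

/-! ### Auxiliary development for completeness -/

section Aux

/-- Derivability from a set of hypotheses. -/
inductive DF (fl : Flags) (CS : Set (ℕ × Fml)) (Γ : Set Fml) : Fml → Prop
  | hyp {A : Fml} : A ∈ Γ → DF fl CS Γ A
  | ax {A : Fml} : StarAxiom fl A → DF fl CS Γ A
  | an {c : ℕ} {A : Fml} (n : ℕ) (h : (c, A) ∈ CS) : DF fl CS Γ (anFml (Tm.const c) A n)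
  | mp {A B : Fml} : DF fl CS Γ (A.imp B) → DF fl CS Γ A → DF fl CS Γ B

variable {fl : Flags} {CS : Set (ℕ × Fml)}

theorem DF.mono {Γ Δ : Set Fml} (h : Γ ⊆ Δ) : ∀ {A : Fml}, DF fl CS Γ A → DF fl CS Δ A := by
  intro A hA
  induction hA with
  | hyp h' => exact .hyp (h h')
  | ax h' => exact .ax h'
  | an n h' => exact .an n h'
  | mp _ _ ih1 ih2 => exact .mp ih1 ih2

theorem df_of_deriv {Γ : Set Fml} {A : Fml} (h : Deriv fl CS A) : DF fl CS Γ A := by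
  induction h with
  | ax h' => exact .ax h'
  | mp _ _ ih1 ih2 => exact .mp ih1 ih2
  | an n h' => exact .an n h'

theorem deriv_of_df {A : Fml} (h : DF fl CS ∅ A) : Deriv fl CS A := by
  induction h with
  | hyp h' => exact absurd h' (Set.notMem_empty _)
  | ax h' => exact .ax h'
  | an n h' => exact .an n h'
  | mp _ _ ih1 ih2 => exact .mp ih1 ih2

theorem df_id {Γ : Set Fml} (A : Fml) : DF fl CS Γ (A.imp A) :=
  .mp (.mp (.ax (.cl2 A (A.imp A) A)) (.ax (.cl1 A (A.imp A)))) (.ax (.cl1 A A))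

theorem DF.deduction {Γ : Set Fml} {A B : Fml} (h : DF fl CS (insert A Γ) B) :
    DF fl CS Γ (A.imp B) := by
  induction h with
  | hyp h' =>
    rcases Set.mem_insert_iff.1 h' with rfl | h'
    · exact df_id _
    · exact .mp (.ax (.cl1 _ _)) (.hyp h')
  | ax h' => exact .mp (.ax (.cl1 _ _)) (.ax h')
  | an n h' => exact .mp (.ax (.cl1 _ _)) (.an n h')
  | mp _ _ ih1 ih2 => exact .mp (.mp (.ax (.cl2 _ _ _)) ih1) ih2

theorem df_efq {Γ : Set Fml} (A : Fml) : DF fl CS Γ (Fml.bot.imp A) := by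
  apply DF.deduction
  exact .mp (.ax (.cl3 A)) (.mp (.ax (.cl1 Fml.bot A.neg)) (.hyp (Set.mem_insert _ _)))

theorem df_neg_imp {Γ : Set Fml} (A B : Fml) : DF fl CS Γ (A.neg.imp (A.imp B)) := by
  apply DF.deduction; apply DF.deduction
  exact .mp (df_efq B)
    (.mp (.hyp (Set.mem_insert_of_mem _ (Set.mem_insert _ _))) (.hyp (Set.mem_insert _ _)))

theorem df_and'_intro {Γ : Set Fml} (A B : Fml) : DF fl CS Γ (A.imp (B.imp (A.and' B))) := by
  apply DF.deduction; apply DF.deduction; apply DF.deduction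
  exact .mp
    (.mp (.hyp (Set.mem_insert _ _))
      (.hyp (Set.mem_insert_of_mem _ (Set.mem_insert_of_mem _ (Set.mem_insert _ _)))))
    (.hyp (Set.mem_insert_of_mem _ (Set.mem_insert _ _)))

theorem df_and'_left {Γ : Set Fml} (A B : Fml) : DF fl CS Γ ((A.and' B).imp A) := by
  apply DF.deduction
  apply DF.mp (.ax (.cl3 A))
  apply DF.deduction
  -- hyps : A.and' B = (A.imp B.neg).neg, A.neg ; goal : ⊥
  refine DF.mp (.hyp (Set.mem_insert_of_mem _ (Set.mem_insert _ _))) ?_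
  -- goal : A.imp B.neg
  apply DF.deduction
  exact .mp (df_efq B.neg)
    (.mp (.hyp (Set.mem_insert_of_mem _ (Set.mem_insert _ _))) (.hyp (Set.mem_insert _ _)))

theorem df_and'_right {Γ : Set Fml} (A B : Fml) : DF fl CS Γ ((A.and' B).imp B) := by
  apply DF.deduction
  apply DF.mp (.ax (.cl3 B))
  apply DF.deduction
  refine DF.mp (.hyp (Set.mem_insert_of_mem _ (Set.mem_insert _ _))) ?_
  exact .mp (.ax (.cl1 B.neg A)) (.hyp (Set.mem_insert _ _))

theorem df_or'_inl {Γ : Set Fml} (A B : Fml) : DF fl CS Γ (A.imp (A.or' B)) := by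
  apply DF.deduction; apply DF.deduction
  exact .mp (df_efq B)
    (.mp (.hyp (Set.mem_insert _ _)) (.hyp (Set.mem_insert_of_mem _ (Set.mem_insert _ _))))

theorem df_or'_inr {Γ : Set Fml} (A B : Fml) : DF fl CS Γ (B.imp (A.or' B)) :=
  .ax (.cl1 B A.neg)

/-- Compactness of `DF`. -/
theorem DF.compact {Γ : Set Fml} {A : Fml} (h : DF fl CS Γ A) :
    ∃ l : List Fml, (∀ B ∈ l, B ∈ Γ) ∧ DF fl CS {x | x ∈ l} A := by
  induction h with
  | @hyp A h' => exact ⟨[A], by simpa using h', .hyp (by simp)⟩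
  | ax h' => exact ⟨[], by simp, .ax h'⟩
  | an n h' => exact ⟨[], by simp, .an n h'⟩
  | mp _ _ ih1 ih2 =>
    obtain ⟨l1, hl1, d1⟩ := ih1
    obtain ⟨l2, hl2, d2⟩ := ih2
    refine ⟨l1 ++ l2, ?_, .mp (d1.mono ?_) (d2.mono ?_)⟩
    · intro B hB; rcases List.mem_append.1 hB with hB | hB
      · exact hl1 B hB
      · exact hl2 B hB
    · intro x hx; simp only [Set.mem_setOf_eq, List.mem_append] at *; exact Or.inl hx
    · intro x hx; simp only [Set.mem_setOf_eq, List.mem_append] at *; exact Or.inr hx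

theorem df_conjList (l : List Fml) : DF fl CS {x | x ∈ l} (conjList l) := by
  induction l with
  | nil => exact df_id Fml.bot
  | cons A l ih =>
    exact .mp (.mp (df_and'_intro A (conjList l)) (.hyp (by simp)))
      (ih.mono (by intro x hx; simp only [Set.mem_setOf_eq] at *; exact List.mem_cons_of_mem _ hx))

theorem deriv_conj_imp_of_df {l : List Fml} {F : Fml} (h : DF fl CS {x | x ∈ l} F) :
    Deriv fl CS ((conjList l).imp F) := by
  induction l generalizing F with
  | nil =>
    have h0 : DF fl CS ∅ F := by
      have : {x : Fml | x ∈ ([] : List Fml)} = (∅ : Set Fml) := by ext x; simp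
      exact this ▸ h
    exact .mp (.ax (.cl1 F (conjList []))) (deriv_of_df h0)
  | cons A l ih =>
    have h1 : DF fl CS (insert A {x | x ∈ l}) F := by
      have : {x : Fml | x ∈ A :: l} = insert A {x | x ∈ l} := by ext x; simp
      exact this ▸ h
    have h2 : Deriv fl CS ((conjList l).imp (A.imp F)) := ih h1.deduction
    apply deriv_of_df
    apply DF.deduction
    have hc : DF fl CS (insert (conjList (A :: l)) ∅) (conjList (A :: l)) :=
      .hyp (Set.mem_insert _ _)
    have hA : DF fl CS (insert (conjList (A :: l)) ∅) A :=
      .mp (df_and'_left A (conjList l)) hc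
    have hl : DF fl CS (insert (conjList (A :: l)) ∅) (conjList l) :=
      .mp (df_and'_right A (conjList l)) hc
    exact .mp (.mp (df_of_deriv h2) hl) hA

theorem setConsistent_iff {Γ : Set Fml} :
    SetConsistent fl CS Γ ↔ ¬ DF fl CS Γ Fml.bot := by
  constructor
  · intro hc hd
    obtain ⟨l, hl, d⟩ := hd.compact
    exact hc l hl (deriv_conj_imp_of_df d)
  · intro h l hl hd
    exact h (.mp (df_of_deriv hd) ((df_conjList l).mono (fun x hx => hl x hx)))

theorem lindenbaum {Γ : Set Fml} (h : SetConsistent fl CS Γ) :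
    ∃ Δ : Set Fml, Γ ⊆ Δ ∧ MaxConsistent fl CS Δ := by
  obtain ⟨m, hm1, hm2⟩ := zorn_subset_nonempty {Δ : Set Fml | Γ ⊆ Δ ∧ SetConsistent fl CS Δ}
    (fun c hc hchain hcne => by
      obtain ⟨s0, hs0⟩ := hcne
      have key : ∀ l : List Fml, (∀ A ∈ l, A ∈ ⋃₀ c) → ∃ s ∈ c, ∀ A ∈ l, A ∈ s := by
        intro l
        induction l with
        | nil => exact fun _ => ⟨s0, hs0, by simp⟩
        | cons A l ih =>
          intro hl
          obtain ⟨s, hsc, hsl⟩ := ih (fun B hB => hl B (List.mem_cons_of_mem _ hB))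
          obtain ⟨t, htc, hAt⟩ := hl A List.mem_cons_self
          rcases hchain.total hsc htc with hst | hts
          · exact ⟨t, htc, by
              intro B hB
              rcases List.mem_cons.1 hB with rfl | hB
              · exact hAt
              · exact hst (hsl B hB)⟩
          · exact ⟨s, hsc, by
              intro B hB
              rcases List.mem_cons.1 hB with rfl | hB
              · exact hts hAt
              · exact hsl B hB⟩
      refine ⟨⋃₀ c, ⟨(hc hs0).1.trans (Set.subset_sUnion_of_mem hs0), ?_⟩,
        fun s hs => Set.subset_sUnion_of_mem hs⟩
      intro l hl hder
      obtain ⟨s, hsc, hsl⟩ := key l hl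
      exact (hc hsc).2 l hsl hder)
    Γ ⟨subset_rfl, h⟩
  exact ⟨m, hm1, hm2.prop.2, fun Δ hΔ hΔc => hΔ.2 (hm2.2 ⟨hm1.trans hΔ.1, hΔc⟩ hΔ.1)⟩

/-! ### Maximal consistent set lemmas -/

theorem MaxConsistent.not_df_bot {Γ : Set Fml} (h : MaxConsistent fl CS Γ) :
    ¬ DF fl CS Γ Fml.bot := setConsistent_iff.1 h.1

theorem MaxConsistent.mem_of_df {Γ : Set Fml} (h : MaxConsistent fl CS Γ) {A : Fml}
    (hA : DF fl CS Γ A) : A ∈ Γ := by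
  by_contra hn
  have h1 : ¬ SetConsistent fl CS (insert A Γ) :=
    h.2 (insert A Γ) (Set.ssubset_insert hn)
  have h2 : DF fl CS (insert A Γ) Fml.bot := by
    by_contra h3
    exact h1 (setConsistent_iff.2 h3)
  exact h.not_df_bot (.mp h2.deduction hA)

theorem MaxConsistent.mem_of_deriv {Γ : Set Fml} (h : MaxConsistent fl CS Γ) {A : Fml}
    (hA : Deriv fl CS A) : A ∈ Γ := h.mem_of_df (df_of_deriv hA)

theorem MaxConsistent.mp_closed {Γ : Set Fml} (h : MaxConsistent fl CS Γ) {A B : Fml}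
    (h1 : A ∈ Γ) (h2 : A.imp B ∈ Γ) : B ∈ Γ := h.mem_of_df (.mp (.hyp h2) (.hyp h1))

theorem MaxConsistent.not_bot_mem {Γ : Set Fml} (h : MaxConsistent fl CS Γ) :
    Fml.bot ∉ Γ := fun hb => h.not_df_bot (.hyp hb)

theorem MaxConsistent.neg_mem_of_not_mem {Γ : Set Fml} (h : MaxConsistent fl CS Γ) {A : Fml}
    (hA : A ∉ Γ) : A.neg ∈ Γ := by
  apply h.mem_of_df
  have h1 : ¬ SetConsistent fl CS (insert A Γ) :=
    h.2 (insert A Γ) (Set.ssubset_insert hA)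
  have h2 : DF fl CS (insert A Γ) Fml.bot := by
    by_contra h3
    exact h1 (setConsistent_iff.2 h3)
  exact h2.deduction

theorem MaxConsistent.imp_mem_iff {Γ : Set Fml} (h : MaxConsistent fl CS Γ) {A B : Fml} :
    A.imp B ∈ Γ ↔ (A ∉ Γ ∨ B ∈ Γ) := by
  constructor
  · intro h1
    by_cases hA : A ∈ Γ
    · exact Or.inr (h.mp_closed hA h1)
    · exact Or.inl hA
  · rintro (h1 | h1)
    · exact h.mem_of_df (.mp (df_neg_imp A B) (.hyp (h.neg_mem_of_not_mem h1)))
    · exact h.mem_of_df (.mp (.ax (.cl1 B A)) (.hyp h1))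

/-- Closure of MCS under the `j+` axiom, left injection. -/
theorem MaxConsistent.just_plus_left {Γ : Set Fml} (h : MaxConsistent fl CS Γ) {s : Tm}
    (t : Tm) {A : Fml} (hA : Fml.just s A ∈ Γ) : Fml.just (s.plus t) A ∈ Γ :=
  h.mem_of_df (.mp (.ax (.jplus s t A)) (.mp (df_or'_inl _ _) (.hyp hA)))

theorem MaxConsistent.just_plus_right {Γ : Set Fml} (h : MaxConsistent fl CS Γ) (s : Tm)
    {t : Tm} {A : Fml} (hA : Fml.just t A ∈ Γ) : Fml.just (s.plus t) A ∈ Γ :=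
  h.mem_of_df (.mp (.ax (.jplus s t A)) (.mp (df_or'_inr _ _) (.hyp hA)))

/-- Closure of MCS under the `jc*` axiom. -/
theorem MaxConsistent.just_mp {Γ : Set Fml} (h : MaxConsistent fl CS Γ) {c : Tm}
    (hc : c.isCStar = true) {A B : Fml} (h1 : Fml.just c A ∈ Γ)
    (h2 : Fml.just c (A.imp B) ∈ Γ) : Fml.just c B ∈ Γ :=
  h.mem_of_df (.mp (.ax (.jcstar c A B hc))
    (.mp (.mp (df_and'_intro _ _) (.hyp h1)) (.hyp h2)))

/-! ### Lifting (internalization) -/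

theorem deriv_just_plus_left {s : Tm} (t : Tm) {A : Fml} (h : Deriv fl CS (Fml.just s A)) :
    Deriv fl CS (Fml.just (s.plus t) A) :=
  .mp (.ax (.jplus s t A)) (.mp (deriv_of_df (df_or'_inl _ _)) h)

theorem deriv_just_plus_right (s : Tm) {t : Tm} {A : Fml} (h : Deriv fl CS (Fml.just t A)) :
    Deriv fl CS (Fml.just (s.plus t) A) :=
  .mp (.ax (.jplus s t A)) (.mp (deriv_of_df (df_or'_inr _ _)) h)

theorem lifting (hApp : AxAppropriate fl CS) {F : Fml} (h : Deriv fl CS F) :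
    ∃ t : Tm, t.isCStar = true ∧ Deriv fl CS (Fml.just t F) := by
  induction h with
  | @ax A hA =>
    obtain ⟨c, hc⟩ := hApp A hA
    exact ⟨(Tm.const c).plus Tm.cstar, by simp [Tm.isCStar],
      deriv_just_plus_left Tm.cstar (Deriv.an 0 hc)⟩
  | @mp A B _ _ ih1 ih2 =>
    obtain ⟨s, hs, ds⟩ := ih1
    obtain ⟨r, hr, dr⟩ := ih2
    refine ⟨s.plus r, by simp [Tm.isCStar, hs], ?_⟩
    have d1 : Deriv fl CS (Fml.just (s.plus r) (A.imp B)) := deriv_just_plus_left r ds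
    have d2 : Deriv fl CS (Fml.just (s.plus r) A) := deriv_just_plus_right s dr
    exact .mp (.ax (.jcstar (s.plus r) A B (by simp [Tm.isCStar, hs])))
      (.mp (.mp (deriv_of_df (df_and'_intro _ _)) d2) d1)
  | @an c A n hc =>
    exact ⟨(bangIter (n + 1) (Tm.const c)).plus Tm.cstar, by simp [Tm.isCStar],
      deriv_just_plus_left Tm.cstar (Deriv.an (n + 1) hc)⟩

theorem df_foldr_aux {l : List Fml} {F : Fml} :
    ∀ {Γ : Set Fml}, DF fl CS (Γ ∪ {x | x ∈ l}) F → DF fl CS Γ (l.foldr Fml.imp F) := by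
  induction l with
  | nil =>
    intro Γ h
    have : Γ ∪ {x : Fml | x ∈ ([] : List Fml)} = Γ := by ext x; simp
    exact this ▸ h
  | cons A l ih =>
    intro Γ h
    have h1 : DF fl CS ((insert A Γ) ∪ {x | x ∈ l}) F := by
      have : Γ ∪ {x : Fml | x ∈ A :: l} = (insert A Γ) ∪ {x | x ∈ l} := by
        ext x; simp; tauto
      exact this ▸ h
    exact (ih h1).deduction

theorem df_foldr_of_list {l : List Fml} {F : Fml} (h : DF fl CS {x | x ∈ l} F) :
    Deriv fl CS (l.foldr Fml.imp F) := by
  apply deriv_of_df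
  apply df_foldr_aux
  rwa [Set.empty_union]

theorem MaxConsistent.just_foldr {Γ : Set Fml} (h : MaxConsistent fl CS Γ) {u : Tm}
    (hu : u.isCStar = true) :
    ∀ (l : List Fml) (B : Fml), (∀ A ∈ l, Fml.just u A ∈ Γ) →
      Fml.just u (l.foldr Fml.imp B) ∈ Γ → Fml.just u B ∈ Γ := by
  intro l
  induction l with
  | nil => exact fun B _ hB => hB
  | cons A l ih =>
    intro B hl hf
    exact ih B (fun C hC => hl C (List.mem_cons_of_mem _ hC))
      (h.just_mp hu (hl A List.mem_cons_self) hf)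
end Aux

/-- **Completeness of `L*_CS` with respect to subset models**: if `CS` is
axiomatically appropriate in case `jd ∈ L*` and `jt ∉ L*`, then any formula
true at all normal worlds of all `L*_CS`-subset models is derivable. -/
theorem completeness (fl : Flags) (CS : Set (ℕ × Fml)) (hCS : IsCS fl CS)
    (hApp : fl.jd = true → fl.jt = false → AxAppropriate fl CS) (F : Fml)
    (h : ∀ (W : Type) (M : SubsetModel fl CS W), ∀ Γ ∈ M.W0, M.V Γ F) :
    Deriv fl CS F := by
  by_contra hF
  -- `{¬F}` is consistent
  have hsing : SetConsistent fl CS {F.neg} := by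
    rw [setConsistent_iff]
    intro hd
    have hd' : DF fl CS (insert F.neg ∅) Fml.bot := by
      have : ({F.neg} : Set Fml) = insert F.neg ∅ := by ext x; simp
      exact this ▸ hd
    exact hF (.mp (.ax (.cl3 F)) (deriv_of_df hd'.deduction))
  obtain ⟨Γ0, hΓ0sub, hΓ0⟩ := lindenbaum hsing
  -- the canonical subset model
  have hFmem : F ∈ Γ0 := by
    refine h (Set Fml)
      { W0 := {Δ | MaxConsistent fl CS Δ}
        V := fun Δ A => A ∈ Δ
        E := fun Δ t => {S | {A | Fml.just t A ∈ Δ} ⊆ S ∧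
          (t.isCStar = true → ∀ A B : Fml, A ∈ S → A.imp B ∈ S → B ∈ S)}
        w0_nonempty := ⟨Γ0, hΓ0⟩
        v_bot := fun ω hω => hω.not_bot_mem
        v_imp := fun ω hω A B => hω.imp_mem_iff
        v_just := fun ω hω t A => by
          constructor
          · intro hj S hS
            exact hS.1 hj
          · intro hsub
            exact hsub ⟨subset_rfl, fun hc B C hB hC => hω.just_mp hc hB hC⟩
        e_plus := fun ω hω s t S hS =>
          ⟨⟨fun A hA => hS.1 (hω.just_plus_left t hA),
            fun hs => hS.2 (by simp [Tm.isCStar, hs])⟩,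
          ⟨fun A hA => hS.1 (hω.just_plus_right s hA),
            fun ht => hS.2 (by simp [Tm.isCStar, ht])⟩⟩
        e_cstar := fun ω hω S hS => hS.2 rfl
        e_jd := fun hjd ω hω t => by
          by_cases hjt : fl.jt = true
          · exact ⟨ω, hω, fun A hA => hω.mem_of_df (.mp (.ax (.jt t A hjt)) (.hyp hA)),
              fun _ A B hA hB => hω.mp_closed hA hB⟩
          · have hApp' : AxAppropriate fl CS := hApp hjd (by
              cases hjt' : fl.jt
              · rfl
              · exact absurd hjt' hjt)
            have hcons : SetConsistent fl CS {A | Fml.just t A ∈ ω} := by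
              rw [setConsistent_iff]
              intro hd
              obtain ⟨l, hl, d⟩ := hd.compact
              obtain ⟨s, hs, ds⟩ := lifting hApp' (df_foldr_of_list d)
              have hu : (t.plus s).isCStar = true := by simp [Tm.isCStar, hs]
              have h1 : Fml.just (t.plus s) (l.foldr Fml.imp Fml.bot) ∈ ω :=
                hω.mem_of_deriv (deriv_just_plus_right t ds)
              have h2 : Fml.just (t.plus s) Fml.bot ∈ ω :=
                hω.just_foldr hu l Fml.bot (fun A hA => hω.just_plus_left s (hl A hA)) h1
              exact hω.not_df_bot (.mp (.ax (.jd (t.plus s) hjd)) (.hyp h2))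
            obtain ⟨Δ, hsub, hΔ⟩ := lindenbaum hcons
            exact ⟨Δ, hΔ, hsub, fun _ A B hA hB => hΔ.mp_closed hA hB⟩
        e_jt := fun hjt ω hω t =>
          ⟨fun A hA => hω.mem_of_df (.mp (.ax (.jt t A hjt)) (.hyp hA)),
            fun _ A B hA hB => hω.mp_closed hA hB⟩
        e_j4 := fun hj4 ω hω t S hS A hA =>
          hS.1 (hω.mem_of_df (.mp (.ax (.j4 t A hj4)) (.hyp hA)))
        e_cs := fun ω hω c A hcA S hS => hS.1 (hω.mem_of_deriv (Deriv.an 0 hcA))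
        e_cs_bang := fun ω hω c A hcA n S hS =>
          hS.1 (hω.mem_of_deriv (Deriv.an (n + 1) hcA)) }
      Γ0 hΓ0
  have hneg : F.neg ∈ Γ0 := hΓ0sub rfl
  exact hΓ0.not_df_bot (.mp (.hyp hneg) (.hyp hFmem))
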